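/- Let h₃ be the three-dimensional Heisenberg Lie algebra over ℝ, with basis e₁, e₂, e₃ and bracket ⁅e₁,e₂⁆ = e₃ (all other basis brackets zero). Then there exist a nondegenerate symmetric bilinear form B on h₃ of signature (1,2) (Lorentzian) and a bilinear product · on h₃ such that for all x,y,z ∈ h₃: x·y − y·x = ⁅x,y⁆, B(x·y, z) + B(y, x·z) = 0, and L_⁅x,y⁆ = L_x ∘ L_y − L_y ∘ L_x, where L_x(y) = x·y. (Hence the Heisenberg group H₃ is a flat Lorentzian Lie group; its Levi-Civita connection is geodesically complete since H₃ is unimodular.) -/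

import Mathlib

/-- A bilinear form `B` on a real vector space `V` has signature `(p,q)` (i.e. `p`
minuses and `q` pluses) if `V` splits as a direct sum of a `p`-dimensional
subspace on which `B` is negative definite and a `q`-dimensional subspace on
which `B` is positive definite, the two being `B`-orthogonal. -/
def HasSignature {V : Type*} [AddCommGroup V] [Module ℝ V]
    (B : V → V → ℝ) (p q : ℕ) : Prop :=
  ∃ N P : Submodule ℝ V,
    Module.finrank ℝ N = p ∧ Module.finrank ℝ P = q ∧
    IsCompl N P ∧
    (∀ x ∈ N, ∀ y ∈ P, B x y = 0) ∧
    (∀ x ∈ N, x ≠ 0 → B x x < 0) ∧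
    (∀ x ∈ P, x ≠ 0 → 0 < B x x)

section Aux

variable {g : Type*} [LieRing g] [LieAlgebra ℝ g] (b : Module.Basis (Fin 3) ℝ g)

/-- The Lorentzian form with matrix `[[0,0,1],[0,1,0],[1,0,0]]`. -/
noncomputable def auxB : LinearMap.BilinForm ℝ g :=
  LinearMap.mk₂ ℝ
    (fun x y => b.repr x 2 * b.repr y 0 + b.repr x 1 * b.repr y 1 +
      b.repr x 0 * b.repr y 2)
    (by intros; simp [Finsupp.add_apply]; ring)
    (by intros; simp [Finsupp.smul_apply, smul_eq_mul]; ring)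
    (by intros; simp [Finsupp.add_apply]; ring)
    (by intros; simp [Finsupp.smul_apply, smul_eq_mul]; ring)

/-- The Levi-Civita product: `e₁·e₁ = -e₂`, `e₁·e₂ = e₃`, other products zero. -/
noncomputable def auxP : g →ₗ[ℝ] g →ₗ[ℝ] g :=
  LinearMap.mk₂ ℝ
    (fun x y => (-(b.repr x 0 * b.repr y 0)) • b 1 + (b.repr x 0 * b.repr y 1) • b 2)
    (by intros; simp [Finsupp.add_apply, add_mul, neg_add, add_smul]; abel)
    (by intros; simp [Finsupp.smul_apply, smul_eq_mul, mul_assoc, mul_smul, smul_add,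
        smul_neg]
        )
    (by intros; simp [Finsupp.add_apply, mul_add, neg_add, add_smul]; abel)
    (by intros; simp [Finsupp.smul_apply, smul_eq_mul, mul_smul, smul_add, smul_neg,
        mul_left_comm])

@[simp] lemma auxB_apply (x y : g) :
    auxB b x y = b.repr x 2 * b.repr y 0 + b.repr x 1 * b.repr y 1 +
      b.repr x 0 * b.repr y 2 := rfl

@[simp] lemma auxP_apply (x y : g) :
    auxP b x y = (-(b.repr x 0 * b.repr y 0)) • b 1 + (b.repr x 0 * b.repr y 1) • b 2 :=
  rfl

lemma repr_auxP (x y : g) (i : Fin 3) :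
    b.repr (auxP b x y) i =
      (-(b.repr x 0 * b.repr y 0)) * (if (1 : Fin 3) = i then 1 else 0) +
      (b.repr x 0 * b.repr y 1) * (if (2 : Fin 3) = i then 1 else 0) := by
  simp [auxP_apply, Finsupp.add_apply, Finsupp.smul_apply, Module.Basis.repr_self,
    Finsupp.single_apply, smul_eq_mul]
  split_ifs <;> ring

end Aux

/-- The 3-dimensional Heisenberg Lie algebra (basis `e₁,e₂,e₃` with
`⁅e₁,e₂⁆ = e₃` and all other basis brackets zero) carries a flat Lorentzian
structure: a nondegenerate symmetric bilinear form of signature `(1,2)` together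
with a compatible flat Levi-Civita product. -/
theorem heisenberg_flat_lorentzian
    (g : Type*) [LieRing g] [LieAlgebra ℝ g]
    (b : Module.Basis (Fin 3) ℝ g)
    (h12 : ⁅b 0, b 1⁆ = b 2) (h13 : ⁅b 0, b 2⁆ = (0 : g))
    (h23 : ⁅b 1, b 2⁆ = (0 : g)) :
    ∃ (B : LinearMap.BilinForm ℝ g) (P : g →ₗ[ℝ] g →ₗ[ℝ] g),
      (∀ x y : g, B x y = B y x) ∧
      B.Nondegenerate ∧
      HasSignature (fun x y : g => B x y) 1 2 ∧
      (∀ x y : g, P x y - P y x = ⁅x, y⁆) ∧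
      (∀ x y z : g, B (P x y) z + B y (P x z) = 0) ∧
      (∀ x y : g, P ⁅x, y⁆ = P x ∘ₗ P y - P y ∘ₗ P x) := by
  have h21 : ⁅b 1, b 0⁆ = -b 2 := by rw [← lie_skew, h12]
  have h31 : ⁅b 2, b 0⁆ = (0 : g) := by rw [← lie_skew, h13, neg_zero]
  have h32 : ⁅b 2, b 1⁆ = (0 : g) := by rw [← lie_skew, h23, neg_zero]
  -- bracket in coordinates
  have brak : ∀ x y : g,
      ⁅x, y⁆ = (b.repr x 0 * b.repr y 1 - b.repr x 1 * b.repr y 0) • b 2 := by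
    intro x y
    have hx := b.sum_repr x
    have hy := b.sum_repr y
    rw [Fin.sum_univ_three] at hx hy
    conv_lhs => rw [← hx, ← hy]
    simp [lie_add, add_lie, lie_smul, smul_lie, h12, h13, h23, h21, h31, h32,
      smul_smul, sub_smul]
    module
  refine ⟨auxB b, auxP b, ?_, ?_, ?_, ?_, ?_, ?_⟩
  · intro x y; simp [auxB_apply]; ring
  · -- nondegenerate
    refine (LinearMap.IsRefl.nondegenerate_iff_separatingLeft (fun x y h => by
      simp only [auxB_apply] at h ⊢; linear_combination h)).mpr ?_
    intro x hx
    have h0 := hx (b 2)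
    have h1 := hx (b 1)
    have h2 := hx (b 0)
    simp [auxB_apply, Module.Basis.repr_self, Finsupp.single_apply] at h0 h1 h2
    have : ∀ i, b.repr x i = 0 := by
      intro i
      fin_cases i <;> simp_all
    have : b.repr x = 0 := Finsupp.ext this
    simpa using congrArg b.repr.symm this
  · -- signature
    have hne : b 0 - b 2 ≠ 0 := by
      intro h
      have := congrArg (fun v => b.repr v 0) h
      simp [Module.Basis.repr_self, Finsupp.single_apply] at this
    have hli : LinearIndependent ℝ ![b 0 + b 2, b 1] := by
      rw [LinearIndependent.pair_iff]
      intro s t hst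
      have h0 := congrArg (fun v => b.repr v 0) hst
      have h1 := congrArg (fun v => b.repr v 1) hst
      simp [Module.Basis.repr_self, Finsupp.single_apply, Finsupp.add_apply,
        Finsupp.smul_apply] at h0 h1
      exact ⟨h0, h1⟩
    have hsetP : ({b 0 + b 2, b 1} : Set g) = Set.range ![b 0 + b 2, b 1] := by
      ext z
      simp [Fin.exists_fin_two, or_comm]
    refine ⟨Submodule.span ℝ {b 0 - b 2}, Submodule.span ℝ {b 0 + b 2, b 1}, ?_, ?_, ?_, ?_, ?_, ?_⟩
    · exact finrank_span_singleton hne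
    · rw [hsetP, finrank_span_eq_card hli]
      simp
    · constructor
      · rw [Submodule.disjoint_def]
        intro x hxN hxP
        obtain ⟨a, rfl⟩ := Submodule.mem_span_singleton.mp hxN
        obtain ⟨c, d, hcd⟩ := Submodule.mem_span_pair.mp hxP
        have h0 := congrArg (fun v => b.repr v 0) hcd
        have h1 := congrArg (fun v => b.repr v 1) hcd
        have h2 := congrArg (fun v => b.repr v 2) hcd
        simp [Module.Basis.repr_self, Finsupp.single_apply, Finsupp.add_apply,
          Finsupp.smul_apply, Finsupp.sub_apply] at h0 h1 h2
        have ha : a = 0 := by linarith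
        simp [ha]
      · have m0 : b 0 ∈ Submodule.span ℝ {b 0 - b 2} ⊔ Submodule.span ℝ {b 0 + b 2, b 1} := by
          refine Submodule.mem_sup.mpr ⟨(1/2 : ℝ) • (b 0 - b 2),
            Submodule.smul_mem _ _ (Submodule.mem_span_singleton_self _),
            (1/2 : ℝ) • (b 0 + b 2),
            Submodule.smul_mem _ _ (Submodule.subset_span (by simp)), ?_⟩
          simp only [smul_sub, smul_add]
          module
        have m1 : b 1 ∈ Submodule.span ℝ {b 0 - b 2} ⊔ Submodule.span ℝ {b 0 + b 2, b 1} :=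
          Submodule.mem_sup_right (Submodule.subset_span (by simp))
        have m2 : b 2 ∈ Submodule.span ℝ {b 0 - b 2} ⊔ Submodule.span ℝ {b 0 + b 2, b 1} := by
          refine Submodule.mem_sup.mpr ⟨(-(1/2) : ℝ) • (b 0 - b 2),
            Submodule.smul_mem _ _ (Submodule.mem_span_singleton_self _),
            (1/2 : ℝ) • (b 0 + b 2),
            Submodule.smul_mem _ _ (Submodule.subset_span (by simp)), ?_⟩
          simp only [smul_sub, smul_add, neg_smul]
          module
        rw [codisjoint_iff, eq_top_iff, ← b.span_eq]
        apply Submodule.span_le.mpr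
        rintro _ ⟨i, rfl⟩
        fin_cases i
        exacts [m0, m1, m2]
    · intro x hxN y hyP
      obtain ⟨a, rfl⟩ := Submodule.mem_span_singleton.mp hxN
      obtain ⟨c, d, rfl⟩ := Submodule.mem_span_pair.mp hyP
      simp [auxB_apply, Module.Basis.repr_self, Finsupp.single_apply, Finsupp.add_apply,
        Finsupp.smul_apply, Finsupp.sub_apply]
    · intro x hxN hx0
      obtain ⟨a, rfl⟩ := Submodule.mem_span_singleton.mp hxN
      have ha : a ≠ 0 := by
        rintro rfl; simp at hx0
      simp [auxB_apply, Module.Basis.repr_self, Finsupp.single_apply, Finsupp.smul_apply,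
        Finsupp.sub_apply]
      nlinarith [sq_nonneg a, mul_self_pos.mpr ha]
    · intro x hxP hx0
      obtain ⟨c, d, rfl⟩ := Submodule.mem_span_pair.mp hxP
      have hcd : c ≠ 0 ∨ d ≠ 0 := by
        by_contra h
        push_neg at h
        obtain ⟨rfl, rfl⟩ := h
        simp at hx0
      simp [auxB_apply, Module.Basis.repr_self, Finsupp.single_apply, Finsupp.add_apply,
        Finsupp.smul_apply]
      rcases hcd with h | h
      · nlinarith [sq_nonneg d, mul_self_pos.mpr h]
      · nlinarith [sq_nonneg c, mul_self_pos.mpr h]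
  · -- torsion free
    intro x y
    rw [brak x y]
    simp [auxP_apply]
    module
  · -- metric
    intro x y z
    simp [auxB_apply, repr_auxP, Finsupp.add_apply, Finsupp.smul_apply,
      Module.Basis.repr_self, Finsupp.single_apply]
    ring
  · -- flat
    intro x y
    apply LinearMap.ext
    intro w
    rw [brak x y]
    simp [auxP_apply, repr_auxP, Finsupp.add_apply, Finsupp.smul_apply,
      Module.Basis.repr_self, Finsupp.single_apply, smul_smul, mul_comm, mul_left_comm]
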